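/- Let n ≥ 3 and let A, B be symmetric n×n complex matrices (Aᵀ = A, Bᵀ = B) with rank A = 2. Let ε denote the nilpotent generator of the dual numbers ℂ[ε]/(ε²), and let M = A' + ε•B' be the matrix over the dual numbers obtained by mapping A and B entrywise into ℂ[ε]/(ε²). Then all 3×3 minors of M vanish (i.e. det(M.submatrix f g) = 0 for all maps f, g : Fin 3 → Fin n) if and only if B maps the kernel of A into the image of A, i.e. for every v ∈ ℂⁿ with A·v = 0 there exists w ∈ ℂⁿ with B·v = A·w. -/

import Mathlib

open Matrix TrivSqZeroExt
open scoped DualNumber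

set_option synthInstance.maxHeartbeats 1000000
set_option maxHeartbeats 1600000

/-- Expansion of a `3×3` determinant whose rows are linear combinations. -/
lemma det_rows_sum' {R : Type*} [CommRing R] {m : Type*} [Fintype m] [DecidableEq m]
    (c : Fin 3 → m → R) (r : m → Fin 3 → R) :
    det (Matrix.of fun i => ∑ x, c i x • r x) =
      ∑ k : Fin 3 → m, (∏ i, c i (k i)) * det (Matrix.of fun i => r (k i)) := by
  have h := (Matrix.detRowAlternating (R := R) (n := Fin 3)).toMultilinearMap.map_sum
    (g := fun i x => c i x • r x)
  rw [show (det (Matrix.of fun i => ∑ x, c i x • r x)) =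
      (Matrix.detRowAlternating (R := R) (n := Fin 3)).toMultilinearMap
        (fun i => ∑ x, c i x • r x) from rfl, h]
  refine Finset.sum_congr rfl fun k _ => ?_
  rw [MultilinearMap.map_smul_univ, smul_eq_mul]
  rfl

lemma minors_mul_left {R : Type*} [CommRing R] {l m o : Type*} [Fintype m] [DecidableEq m]
    (P : Matrix l m R) (N : Matrix m o R)
    (h : ∀ (f : Fin 3 → m) (g : Fin 3 → o), det (N.submatrix f g) = 0)
    (f : Fin 3 → l) (g : Fin 3 → o) : det ((P * N).submatrix f g) = 0 := by
  have hrw : (P * N).submatrix f g = Matrix.of fun i => ∑ x, P (f i) x • (fun j => N x (g j)) := by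
    ext i j
    simp [Matrix.mul_apply, Finset.sum_apply]
  rw [hrw, det_rows_sum']
  refine Finset.sum_eq_zero fun k _ => ?_
  have he : det (Matrix.of fun i => fun j => N (k i) (g j)) = det (N.submatrix k g) := rfl
  rw [he, h]
  ring

lemma minors_mul_right {R : Type*} [CommRing R] {l m o : Type*} [Fintype m] [DecidableEq m]
    (N : Matrix l m R) (Q : Matrix m o R)
    (h : ∀ (f : Fin 3 → l) (g : Fin 3 → m), det (N.submatrix f g) = 0)
    (f : Fin 3 → l) (g : Fin 3 → o) : det ((N * Q).submatrix f g) = 0 := by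
  have hT : ∀ (f : Fin 3 → m) (g : Fin 3 → l), det (Nᵀ.submatrix f g) = 0 := by
    intro f g
    rw [← Matrix.transpose_submatrix, Matrix.det_transpose]
    exact h g f
  have := minors_mul_left Qᵀ Nᵀ hT g f
  rw [← Matrix.transpose_mul] at this
  rw [← Matrix.det_transpose, Matrix.transpose_submatrix]
  exact this

lemma dep3 {n : ℕ} (S : Submodule ℂ (Fin n → ℂ)) (hS : Module.finrank ℂ S = 2)
    (t : Fin 3 → (Fin n → ℂ)) (ht : ∀ j, t j ∈ S) :
    ∃ c : Fin 3 → ℂ, (∑ j, c j • t j) = 0 ∧ ∃ j, c j ≠ 0 := by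
  have hnotli : ¬ LinearIndependent ℂ (fun j => (⟨t j, ht j⟩ : S)) := by
    intro hli
    have := hli.fintype_card_le_finrank
    rw [hS, Fintype.card_fin] at this
    omega
  obtain ⟨c, hc, j, hj⟩ := Fintype.not_linearIndependent_iff.mp hnotli
  refine ⟨c, ?_, j, hj⟩
  have := congrArg (Subtype.val) hc
  simpa using this

lemma minors_rank2 {n : ℕ} (A : Matrix (Fin n) (Fin n) ℂ) (h : A.rank = 2)
    (f g : Fin 3 → Fin n) : det (A.submatrix f g) = 0 := by
  obtain ⟨c, hc, j, hj⟩ := dep3 (LinearMap.range A.mulVecLin) h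
    (fun j => A *ᵥ Pi.single (g j) 1) (fun j => ⟨Pi.single (g j) 1, rfl⟩)
  rw [← Matrix.exists_mulVec_eq_zero_iff]
  refine ⟨c, fun h0 => hj (congrFun h0 j), ?_⟩
  ext i
  have := congrFun hc (f i)
  simpa [Matrix.mulVec, dotProduct, mul_comm] using this

lemma exists_minor_ne_zero {n : ℕ} (s : Fin 3 → (Fin n → ℂ)) (hs : LinearIndependent ℂ s) :
    ∃ f : Fin 3 → Fin n, det (Matrix.of fun i j => s j (f i)) ≠ 0 := by
  by_contra hcon
  push_neg at hcon
  set N : Matrix (Fin n) (Fin 3) ℂ := Matrix.of fun x j => s j x with hN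
  have hinj : Function.Injective N.mulVecLin := by
    rw [← LinearMap.ker_eq_bot, Matrix.ker_mulVecLin_eq_bot_iff]
    intro c hc
    rw [Fintype.linearIndependent_iff] at hs
    refine funext (hs c ?_)
    ext x
    have := congrFun hc x
    simpa [hN, Matrix.mulVec, dotProduct, mul_comm] using this
  obtain ⟨L, hL⟩ := LinearMap.exists_leftInverse_of_injective N.mulVecLin
    (LinearMap.ker_eq_bot.mpr hinj)
  have hmat : (LinearMap.toMatrix' L) * N = 1 := by
    have h2 : N.mulVecLin = Matrix.toLin' N := (Matrix.toLin'_apply' N).symm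
    calc (LinearMap.toMatrix' L) * N
        = (LinearMap.toMatrix' L) * LinearMap.toMatrix' (Matrix.toLin' N) := by
          rw [LinearMap.toMatrix'_toLin']
      _ = LinearMap.toMatrix' (L ∘ₗ N.mulVecLin) := by
          rw [← LinearMap.toMatrix'_comp, h2]
      _ = 1 := by rw [hL]; exact LinearMap.toMatrix'_id
  have h1 : (1 : ℂ) = det ((LinearMap.toMatrix' L) * N) := by rw [hmat, det_one]
  have hrows : (LinearMap.toMatrix' L) * N =
      Matrix.of fun i => ∑ x, (LinearMap.toMatrix' L) i x • (fun j => s j x) := by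
    ext i j
    simp [Matrix.mul_apply, Finset.sum_apply, hN]
  rw [hrows, det_rows_sum' (c := fun i x => (LinearMap.toMatrix' L) i x) (r := fun x j => s j x)] at h1
  have hz : ∀ k : Fin 3 → Fin n,
      (∏ i, (LinearMap.toMatrix' L) i (k i)) *
        det (Matrix.of fun i => fun j => s j (k i)) = 0 := by
    intro k
    rw [show (Matrix.of fun i => fun j => s j (k i)) = (Matrix.of fun i j => s j (k i)) from rfl,
      hcon k]
    ring
  rw [Finset.sum_congr rfl (fun k _ => hz k), Finset.sum_const_zero] at h1
  exact one_ne_zero h1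

lemma exists_factor {n : ℕ} (A B : Matrix (Fin n) (Fin n) ℂ)
    (h : ∀ v, A *ᵥ v = 0 → ∃ w, B *ᵥ v = A *ᵥ w) :
    ∃ X Y : Matrix (Fin n) (Fin n) ℂ, B = A * X + Y * A := by
  set a := A.mulVecLin with ha
  set b := B.mulVecLin with hb
  have hker : ∀ v ∈ LinearMap.ker a, b v ∈ LinearMap.range a := by
    intro v hv
    obtain ⟨w, hw⟩ := h v hv
    exact ⟨w, hw.symm⟩
  obtain ⟨U, hU⟩ := Submodule.exists_isCompl (LinearMap.ker a)
  set π : (Fin n → ℂ) →ₗ[ℂ] (Fin n → ℂ) :=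
    (LinearMap.ker a).subtype ∘ₗ Submodule.linearProjOfIsCompl _ _ hU with hπ
  have hπ_mem : ∀ v, π v ∈ LinearMap.ker a := fun v => ((Submodule.linearProjOfIsCompl _ _ hU) v).2
  have hπ_id : ∀ v ∈ LinearMap.ker a, π v = v := by
    intro v hv
    simp [hπ, Submodule.linearProjOfIsCompl_apply_left hU ⟨v, hv⟩]
    exact congrArg Subtype.val (Submodule.linearProjOfIsCompl_apply_left hU ⟨v, hv⟩)
  obtain ⟨sec, hsec⟩ := a.rangeRestrict.exists_rightInverse_of_surjective
    (LinearMap.range_eq_top.mpr (LinearMap.surjective_rangeRestrict a))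
  have hsec' : ∀ w : LinearMap.range a, a (sec w) = (w : Fin n → ℂ) := by
    intro w
    have := congrArg (Subtype.val) (congrFun (congrArg DFunLike.coe hsec) w)
    simpa using this
  have hbπ : ∀ v, b (π v) ∈ LinearMap.range a := fun v => hker _ (hπ_mem v)
  set X : (Fin n → ℂ) →ₗ[ℂ] (Fin n → ℂ) :=
    sec ∘ₗ (LinearMap.codRestrict (LinearMap.range a) (b ∘ₗ π) hbπ) with hX
  have hXa : ∀ v, a (X v) = b (π v) := by
    intro v
    simp only [hX, LinearMap.comp_apply]
    exact hsec' _
  obtain ⟨W, hW⟩ := Submodule.exists_isCompl (LinearMap.range a)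
  set q : (Fin n → ℂ) →ₗ[ℂ] LinearMap.range a := Submodule.linearProjOfIsCompl _ _ hW with hq
  set Y : (Fin n → ℂ) →ₗ[ℂ] (Fin n → ℂ) :=
    (b - b ∘ₗ π) ∘ₗ sec ∘ₗ q with hY
  have hYa : ∀ v, Y (a v) = b v - b (π v) := by
    intro v
    have hqa : q (a v) = ⟨a v, ⟨v, rfl⟩⟩ :=
      Submodule.linearProjOfIsCompl_apply_left hW ⟨a v, ⟨v, rfl⟩⟩
    simp only [hY, LinearMap.comp_apply, hqa]
    set z := sec ⟨a v, ⟨v, rfl⟩⟩ with hz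
    have haz : a z = a v := hsec' _
    have hmem : z - v ∈ LinearMap.ker a := by
      rw [LinearMap.mem_ker, map_sub, haz, sub_self]
    have hπzv : π z - π v = z - v := by rw [← map_sub]; exact hπ_id _ hmem
    have hzπ : z - π z = v - π v := by
      rw [sub_eq_sub_iff_sub_eq_sub]
      exact hπzv.symm
    rw [LinearMap.sub_apply, LinearMap.comp_apply, show b z - b (π z) = b (z - π z) by
      rw [map_sub], hzπ, map_sub]
  have hfact : b = a ∘ₗ X + Y ∘ₗ a := by
    refine LinearMap.ext fun v => ?_
    simp only [LinearMap.add_apply, LinearMap.comp_apply, hXa, hYa]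
    abel
  refine ⟨LinearMap.toMatrix' X, LinearMap.toMatrix' Y, ?_⟩
  have hBm : B = LinearMap.toMatrix' b := by
    rw [hb, ← Matrix.toLin'_apply' B, LinearMap.toMatrix'_toLin']
  have hAm : A = LinearMap.toMatrix' a := by
    rw [ha, ← Matrix.toLin'_apply' A, LinearMap.toMatrix'_toLin']
  rw [hBm, hfact, map_add, LinearMap.toMatrix'_comp, LinearMap.toMatrix'_comp, ← hAm]

lemma det3_snd' (P Q : Matrix (Fin 3) (Fin 3) ℂ) (s : Fin 3 → Fin 3 → ℂ)
    (h0 : ∀ i, P i 0 = 0) (hs0 : ∀ i, s 0 i = Q i 0) (hs1 : ∀ i, s 1 i = P i 1)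
    (hs2 : ∀ i, s 2 i = P i 2) :
    (det (Matrix.of fun i j => (inl (P i j) + ε * inl (Q i j) : ℂ[ε]))).snd
      = det (Matrix.of fun i j => s j i) := by
  rw [det_fin_three, det_fin_three]
  simp only [Matrix.of_apply, h0, hs0, hs1, hs2]
  simp [DualNumber.snd_mul, TrivSqZeroExt.snd_mul, TrivSqZeroExt.fst_mul, smul_eq_mul]

lemma mulvec_entry {n : ℕ} (A B : Matrix (Fin n) (Fin n) ℂ) (u : Fin n → ℂ) (i0 : Fin n) :
    ((A.map (algebraMap ℂ ℂ[ε]) + (ε : ℂ[ε]) • B.map (algebraMap ℂ ℂ[ε])) *ᵥ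
        (fun t => algebraMap ℂ ℂ[ε] (u t))) i0
      = inl ((A *ᵥ u) i0) + ε * inl ((B *ᵥ u) i0) := by
  apply TrivSqZeroExt.ext <;>
    simp [Matrix.mulVec, dotProduct, TrivSqZeroExt.fst_sum, TrivSqZeroExt.snd_sum,
      TrivSqZeroExt.fst_mul, TrivSqZeroExt.snd_mul, TrivSqZeroExt.algebraMap_eq_inl,
      smul_eq_mul, mul_comm]

lemma minors_mulvec {n : ℕ} {R : Type*} [CommRing R] (M : Matrix (Fin n) (Fin n) R)
    (hmin : ∀ f g : Fin 3 → Fin n, det (M.submatrix f g) = 0)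
    (w : Fin 3 → Fin n → R) (f : Fin 3 → Fin n) :
    det (Matrix.of fun i j => (M *ᵥ w j) (f i)) = 0 := by
  rw [← Matrix.det_transpose]
  have htr : (Matrix.of fun i j => (M *ᵥ w j) (f i))ᵀ
      = Matrix.of fun i => ∑ t, w i t • (fun j => M (f j) t) := by
    refine Matrix.ext fun i j => ?_
    rw [Matrix.transpose_apply, Matrix.of_apply, Matrix.of_apply, Finset.sum_apply]
    simp only [Matrix.mulVec, dotProduct, Pi.smul_apply, smul_eq_mul]
    exact Finset.sum_congr rfl fun t _ => mul_comm _ _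
  rw [htr, det_rows_sum']
  refine Finset.sum_eq_zero fun k _ => ?_
  have he : (Matrix.of fun i => fun j => M (f j) (k i)) = (M.submatrix f k)ᵀ := rfl
  rw [he, Matrix.det_transpose, hmin f k]
  ring

lemma dual_fac {n : ℕ} (A' X' Y' : Matrix (Fin n) (Fin n) ℂ[ε]) :
    (1 + (ε : ℂ[ε]) • Y') * A' * (1 + (ε : ℂ[ε]) • X')
      = A' + ((ε : ℂ[ε]) • (A' * X') + (ε : ℂ[ε]) • (Y' * A')) := by
  rw [Matrix.add_mul, Matrix.one_mul, Matrix.smul_mul, Matrix.add_mul, Matrix.mul_add,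
    Matrix.mul_one, Matrix.mul_smul, Matrix.smul_mul, Matrix.mul_add, Matrix.mul_one,
    Matrix.mul_smul]
  rw [smul_add, smul_smul, DualNumber.eps_mul_eps, zero_smul, add_zero]
  abel

/-- Let `n ≥ 3`, `A, B` symmetric `n×n` complex matrices with `rank A = 2`,
and let `M = A' + ε•B'` over the dual numbers `ℂ[ε]/(ε²)`.  Then all `3×3` minors of `M`
vanish iff `B` maps the kernel of `A` into the image of `A`. -/
theorem minors_dualNumber_vanish_iff (n : ℕ) (hn : 3 ≤ n)
    (A B : Matrix (Fin n) (Fin n) ℂ)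
    (hA : A.transpose = A) (hB : B.transpose = B) (hrank : A.rank = 2) :
    (∀ f g : Fin 3 → Fin n,
        (((A.map (algebraMap ℂ (DualNumber ℂ)) +
            (DualNumber.eps : DualNumber ℂ) • B.map (algebraMap ℂ (DualNumber ℂ))).submatrix f g).det = 0))
      ↔ (∀ v : Fin n → ℂ, A.mulVec v = 0 → ∃ w : Fin n → ℂ, B.mulVec v = A.mulVec w) := by
  set φ := algebraMap ℂ (DualNumber ℂ) with hφ
  set M : Matrix (Fin n) (Fin n) ℂ[ε] := A.map φ + (ε : ℂ[ε]) • B.map φ with hM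
  constructor
  · -- minors vanish → B (ker A) ⊆ im A
    intro hmin v hAv
    by_contra hcon
    push_neg at hcon
    set S := LinearMap.range A.mulVecLin with hSdef
    have hS2 : Module.finrank ℂ S = 2 := hrank
    let c : Module.Basis (Fin 2) ℂ S := Module.finBasisOfFinrankEq ℂ S hS2
    set x : Fin 2 → (Fin n → ℂ) := fun i => (c i : Fin n → ℂ) with hx
    have hxS : ∀ i, x i ∈ S := fun i => (c i).2
    have hBvS : B *ᵥ v ∉ S := by
      intro hmem
      obtain ⟨w, hw⟩ := hmem
      exact hcon w hw.symm
    have hxind : LinearIndependent ℂ x := c.linearIndependent.map' S.subtype S.ker_subtype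
    have hspan : Submodule.span ℂ (Set.range x) = S := by
      have hrx : Set.range x = S.subtype '' (Set.range c) := by
        ext y
        simp [hx, Set.range_comp]
      rw [hrx, ← Submodule.map_span, c.span_eq, Submodule.map_top, Submodule.range_subtype]
    set s : Fin 3 → (Fin n → ℂ) := Fin.cons (B *ᵥ v) x with hs
    have hli : LinearIndependent ℂ s := by
      rw [hs, linearIndependent_fin_cons]
      exact ⟨hxind, by rw [hspan]; exact hBvS⟩
    obtain ⟨f, hf⟩ := exists_minor_ne_zero s hli
    have hchoice : ∀ i : Fin 2, ∃ w, A *ᵥ w = x i := fun i => hxS i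
    choose u' hu' using hchoice
    set u : Fin 3 → (Fin n → ℂ) := Fin.cons v u' with hu
    set P : Matrix (Fin 3) (Fin 3) ℂ := Matrix.of fun i j => (A *ᵥ u j) (f i) with hP
    set Q : Matrix (Fin 3) (Fin 3) ℂ := Matrix.of fun i j => (B *ᵥ u j) (f i) with hQ
    have hP0 : ∀ i, P i 0 = 0 := by
      intro i
      simp [hP, hu, hAv]
    have hTM : (Matrix.of fun i j => (inl (P i j) + ε * inl (Q i j) : ℂ[ε]))
        = Matrix.of fun i j => (M *ᵥ (fun t => φ (u j t))) (f i) := by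
      refine Matrix.ext fun i j => ?_
      rw [Matrix.of_apply, Matrix.of_apply]
      exact (mulvec_entry A B (u j) (f i)).symm
    have hT0 : det (Matrix.of fun i j => (inl (P i j) + ε * inl (Q i j) : ℂ[ε])) = 0 := by
      rw [hTM]
      exact minors_mulvec M hmin _ f
    have hs0 : ∀ i, s 0 (f i) = Q i 0 := fun i => rfl
    have hs1 : ∀ i, s 1 (f i) = P i 1 := fun i => (congrFun (hu' 0) (f i)).symm
    have hs2 : ∀ i, s 2 (f i) = P i 2 := fun i => (congrFun (hu' 1) (f i)).symm
    have hsnd := det3_snd' P Q (fun j i => s j (f i)) hP0 hs0 hs1 hs2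
    rw [hT0] at hsnd
    refine hf ?_
    rw [show (Matrix.of fun i j => s j (f i)) =
      (Matrix.of fun i j => (fun j i => s j (f i)) j i) from rfl, ← hsnd]
    simp
  · -- B (ker A) ⊆ im A → minors vanish
    intro hprop f g
    obtain ⟨X, Y, hBXY⟩ := exists_factor A B hprop
    have hAm : ∀ (f g : Fin 3 → Fin n), det ((A.map φ).submatrix f g) = 0 := by
      intro f g
      rw [Matrix.submatrix_map, ← RingHom.mapMatrix_apply, ← RingHom.map_det,
        minors_rank2 A hrank f g, map_zero]
    have hfac : M = (1 + (ε : ℂ[ε]) • (Y.map φ)) * A.map φ * (1 + (ε : ℂ[ε]) • (X.map φ)) := by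
      rw [dual_fac, hM, hBXY, Matrix.map_add _ (fun a b => map_add φ a b), Matrix.map_mul,
        Matrix.map_mul, smul_add]
    rw [hfac]
    exact minors_mul_right _ _ (fun f' g' => minors_mul_left _ _ hAm f' g') f g
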